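/- arXiv:2308.08400 — 2 statements merged into one kernel-verified Lean document; each statement's English description precedes it below -/
import Mathlib

section
/- Let X and Y be real Banach spaces, let U : X → Y be a surjection such that for every x₀ ∈ X there exists ε(x₀) > 0 with U restricted to the closed ball B(x₀, ε(x₀)) isometric, and suppose there exists x₀ ∈ X such that the image U(B(x₀, ε(x₀))) has non-empty interior in Y. Then there exists a unique affine isometric map Ū : X → Y (i.e. Ū((1−t)x + t y) = (1−t)Ū(x) + t Ū(y) for all x, y ∈ X, t ∈ [0,1], and ‖Ū(x) − Ū(y)‖ = ‖x − y‖ for all x, y ∈ X) which agrees with U on B(x₀, ε(x₀)). -/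
section MoriAux

theorem mori_msr {X : Type*} [NormedAddCommGroup X] [NormedSpace ℝ X]
    (τ : ℝ) (hτ : 0 < τ) (z u u' : X)
    (hD : ‖u - z‖ ≤ (9/8) * τ)
    (hprobe : ∀ x : X, ‖x - z‖ ≤ τ → ‖u' - x‖ = ‖u - x‖) : u' = u := by
  by_cases hsmall : ‖u - z‖ ≤ τ
  · have h := hprobe u hsmall
    rw [sub_self, norm_zero, norm_eq_zero, sub_eq_zero] at h
    exact h
  push_neg at hsmall
  set k := u - z with hk
  set w := u' - u with hw
  have hv : ∀ v : X, ‖v - k‖ ≤ τ → ‖v + w‖ = ‖v‖ := by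
    intro v hvk
    have h1 : ‖(u - v) - z‖ ≤ τ := by
      have e0 : (u - v) - z = -(v - k) := by rw [hk]; abel
      rw [e0, norm_neg]; exact hvk
    have h2 := hprobe (u - v) h1
    have e1 : u' - (u - v) = v + w := by rw [hw]; abel
    have e2 : u - (u - v) = v := by abel
    rwa [e1, e2] at h2
  set D := ‖k‖ with hDdef
  have hDpos : 0 < D := lt_trans hτ hsmall
  set m₀ := D - τ with hm₀
  have hm₀pos : 0 < m₀ := sub_pos.mpr hsmall
  have hm₀le : m₀ ≤ τ/8 := by rw [hm₀]; linarith [hD]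
  obtain ⟨ee, hkD, heesmul⟩ : ∃ ee : X, k = D • ee ∧ ∀ c : ℝ, ‖c • ee‖ = |c| := by
    refine ⟨D⁻¹ • k, ?_, ?_⟩
    · rw [smul_inv_smul₀ hDpos.ne']
    · intro c
      rw [smul_smul, norm_smul, Real.norm_eq_abs, ← hDdef, abs_mul, abs_inv, abs_of_pos hDpos]
      field_simp
  set ω := ‖w‖ with hω
  have hωnn : 0 ≤ ω := norm_nonneg w
  rcases eq_or_lt_of_le hωnn with hω0 | hωpos
  · have h0 : w = 0 := by rw [← norm_eq_zero, ← hω, ← hω0]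
    exact sub_eq_zero.mp h0
  · exfalso
    have hω2 : ω ≤ 2 * m₀ := by
      have hmem : ‖(m₀ • ee) - k‖ ≤ τ := by
        have e0 : (m₀ • ee) - k = (m₀ - D) • ee := by rw [hkD]; module
        rw [e0, heesmul, abs_of_nonpos (by rw [hm₀]; linarith), hm₀]
        linarith
      have h := hv (m₀ • ee) hmem
      have hnm : ‖m₀ • ee‖ = m₀ := by rw [heesmul, abs_of_pos hm₀pos]
      have e3 : w = (m₀ • ee + w) - m₀ • ee := by abel
      calc ω = ‖(m₀ • ee + w) - m₀ • ee‖ := by rw [hω, ← e3]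
        _ ≤ ‖m₀ • ee + w‖ + ‖m₀ • ee‖ := norm_sub_le _ _
        _ = m₀ + m₀ := by rw [h, hnm]
        _ = 2 * m₀ := by ring
    -- Chain A
    have chainA : ∀ j : ℕ, ∀ δ : ℝ, 0 ≤ δ → δ ≤ τ → (j : ℝ) * ω ≤ δ →
        ‖(m₀ + δ) • ee + (j : ℝ) • w‖ = m₀ + δ := by
      intro j
      induction j with
      | zero =>
        intro δ h0 _ _
        simp only [Nat.cast_zero, zero_smul, add_zero]
        rw [heesmul, abs_of_nonneg (by linarith)]
      | succ j ih =>
        intro δ h0 h1 hjω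
        push_cast at hjω
        have hjω' : (j : ℝ) * ω ≤ δ - ω := by nlinarith
        have hjωle : (j : ℝ) * ω ≤ δ := by nlinarith
        have hmem : ‖((m₀ + δ) • ee + (j : ℝ) • w) - k‖ ≤ τ := by
          have e0 : ((m₀ + δ) • ee + (j : ℝ) • w) - k = (δ - τ) • ee + (j : ℝ) • w := by
            rw [hkD, hm₀]; module
          rw [e0]
          have hjnorm : ‖(j : ℝ) • w‖ = (j : ℝ) * ω := by
            rw [norm_smul, Real.norm_eq_abs, abs_of_nonneg (by positivity), hω]
          calc ‖(δ - τ) • ee + (j : ℝ) • w‖ ≤ ‖(δ - τ) • ee‖ + ‖(j : ℝ) • w‖ := norm_add_le _ _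
            _ = (τ - δ) + (j : ℝ) * ω := by rw [heesmul, abs_of_nonpos (by linarith), hjnorm]; ring
            _ ≤ τ := by linarith
        have h := hv _ hmem
        have e1 : ((m₀ + δ) • ee + (j : ℝ) • w) + w = (m₀ + δ) • ee + ((j : ℝ) + 1) • w := by
          module
        rw [e1, ih δ h0 h1 hjωle] at h
        push_cast
        exact h
    -- Chain B
    have chainB : ∀ j : ℕ, (j : ℝ) * ω ≤ τ - m₀ → ‖m₀ • ee - (j : ℝ) • w‖ = m₀ := by
      intro j
      induction j with
      | zero =>
        intro _
        simp only [Nat.cast_zero, zero_smul, sub_zero]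
        rw [heesmul, abs_of_pos hm₀pos]
      | succ j ih =>
        intro hjω
        push_cast at hjω
        have hjω0 : (j : ℝ) * ω ≤ τ - m₀ := by nlinarith
        have hmem : ‖(m₀ • ee - ((j : ℝ) + 1) • w) - k‖ ≤ τ := by
          have e0 : (m₀ • ee - ((j : ℝ) + 1) • w) - k = -((τ) • ee + ((j : ℝ) + 1) • w) := by
            rw [hkD, hm₀]; module
          rw [e0, norm_neg]
          have hA := chainA (j + 1) (τ - m₀) (by linarith) (by linarith) (by push_cast; linarith)
          have e1 : m₀ + (τ - m₀) = τ := by ring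
          rw [e1] at hA
          push_cast at hA
          rw [hA]
        have h := hv _ hmem
        have e1 : (m₀ • ee - ((j : ℝ) + 1) • w) + w = m₀ • ee - (j : ℝ) • w := by module
        rw [e1, ih hjω0] at h
        push_cast
        exact h.symm
    -- final contradiction
    set J := Nat.floor ((τ - m₀) / ω) with hJ
    have hτm₀ : 0 ≤ (τ - m₀) / ω := by
      apply div_nonneg _ (le_of_lt hωpos)
      linarith
    have hJ1 : (J : ℝ) * ω ≤ τ - m₀ := by
      have h1 := Nat.floor_le hτm₀
      rw [← hJ] at h1
      calc (J : ℝ) * ω ≤ ((τ - m₀) / ω) * ω := mul_le_mul_of_nonneg_right h1 (le_of_lt hωpos)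
        _ = τ - m₀ := by field_simp
    have hJ2 : τ - m₀ < ((J : ℝ) + 1) * ω := by
      have h1 := Nat.lt_floor_add_one ((τ - m₀) / ω)
      rw [← hJ] at h1
      calc τ - m₀ = ((τ - m₀) / ω) * ω := by field_simp
        _ < ((J : ℝ) + 1) * ω := mul_lt_mul_of_pos_right h1 hωpos
    have hB := chainB J hJ1
    have hlow : (J : ℝ) * ω - m₀ ≤ m₀ := by
      have h1 : ‖(J : ℝ) • w‖ - ‖m₀ • ee‖ ≤ ‖(J : ℝ) • w - m₀ • ee‖ :=
        norm_sub_norm_le _ _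
      rw [norm_sub_rev, hB] at h1
      have e1 : ‖(J : ℝ) • w‖ = (J : ℝ) * ω := by
        rw [norm_smul, Real.norm_eq_abs, abs_of_nonneg (by positivity), hω]
      have e2 : ‖m₀ • ee‖ = m₀ := by rw [heesmul, abs_of_pos hm₀pos]
      rw [e1, e2] at h1
      linarith
    nlinarith [hω2, hJ2, hlow, hm₀le, hτ]

theorem mori_lens {X Y : Type*} [NormedAddCommGroup X] [NormedSpace ℝ X]
    [NormedAddCommGroup Y] [NormedSpace ℝ Y]
    (f : X → Y) (g : Y → X) (u v : X)
    (hf : ∀ a b : X, ‖a - (1/2 : ℝ) • (u + v)‖ ≤ ‖u - v‖/2 →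
      ‖b - (1/2 : ℝ) • (u + v)‖ ≤ ‖u - v‖/2 → ‖f a - f b‖ = ‖a - b‖)
    (hg : ∀ z : Y, ‖z - f u‖ ≤ ‖u - v‖/2 → ‖z - f v‖ ≤ ‖u - v‖/2 →
      f (g z) = z ∧ ‖g z - u‖ ≤ ‖u - v‖/2 ∧ ‖g z - v‖ ≤ ‖u - v‖/2)
    (hgiso : ∀ z z' : Y, ‖z - f u‖ ≤ ‖u - v‖/2 → ‖z - f v‖ ≤ ‖u - v‖/2 →
      ‖z' - f u‖ ≤ ‖u - v‖/2 → ‖z' - f v‖ ≤ ‖u - v‖/2 → ‖g z - g z'‖ = ‖z - z'‖)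
    (hgf : ∀ a : X, ‖a - u‖ ≤ ‖u - v‖/2 → ‖a - v‖ ≤ ‖u - v‖/2 → g (f a) = a) :
    f ((1/2 : ℝ) • (u + v)) = (1/2 : ℝ) • (f u + f v) := by
  classical
  haveI : Nonempty X := ⟨u⟩
  set τ := ‖u - v‖/2 with hτdef
  set m := (1/2 : ℝ) • (u + v) with hm
  have hτnn : 0 ≤ τ := by rw [hτdef]; positivity
  have hmu : ‖m - u‖ = τ := by
    have e : m - u = (1/2 : ℝ) • (v - u) := by rw [hm]; module
    rw [e, norm_smul, Real.norm_eq_abs, norm_sub_rev]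
    rw [hτdef, abs_of_nonneg (by norm_num : (0:ℝ) ≤ 1/2)]; ring
  have hmv : ‖m - v‖ = τ := by
    have e : m - v = (1/2 : ℝ) • (u - v) := by rw [hm]; module
    rw [e, norm_smul, Real.norm_eq_abs]
    rw [hτdef, abs_of_nonneg (by norm_num : (0:ℝ) ≤ 1/2)]; ring
  set S : Set X := {p | ‖p - u‖ ≤ τ ∧ ‖p - v‖ ≤ τ} with hS
  have hmS : m ∈ S := ⟨le_of_eq hmu, le_of_eq hmv⟩
  have hSm : ∀ p ∈ S, ‖p - m‖ ≤ τ := by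
    intro p hp
    have e : p - m = (1/2 : ℝ) • ((p - u) + (p - v)) := by rw [hm]; module
    rw [e, norm_smul, Real.norm_eq_abs]
    have := norm_add_le (p - u) (p - v)
    have h1 : ‖(p - u) + (p - v)‖ ≤ 2 * τ := by
      calc ‖(p - u) + (p - v)‖ ≤ ‖p - u‖ + ‖p - v‖ := norm_add_le _ _
        _ ≤ 2 * τ := by have := hp.1; have := hp.2; simp only [hS, Set.mem_setOf_eq] at *; linarith
    rw [abs_of_pos (by norm_num : (0:ℝ) < 1/2)]
    linarith
  -- images of points of S lie in the lens S' (given by two inequalities)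
  have hfS : ∀ a ∈ S, ‖f a - f u‖ ≤ τ ∧ ‖f a - f v‖ ≤ τ := by
    intro a ha
    constructor
    · rw [hf a u (hSm a ha) (by rw [norm_sub_rev]; exact le_of_eq hmu)]
      exact ha.1
    · rw [hf a v (hSm a ha) (by rw [norm_sub_rev]; exact le_of_eq hmv)]
      exact ha.2
  -- the involution e₀ on S
  set e₀ : X → X := fun p => g (f u + f v - f p) with he₀
  have hz : ∀ a ∈ S, ‖(f u + f v - f a) - f u‖ ≤ τ ∧ ‖(f u + f v - f a) - f v‖ ≤ τ := by
    intro a ha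
    constructor
    · have e : (f u + f v - f a) - f u = -(f a - f v) := by abel
      rw [e, norm_neg]; exact (hfS a ha).2
    · have e : (f u + f v - f a) - f v = -(f a - f u) := by abel
      rw [e, norm_neg]; exact (hfS a ha).1
  have he₀S : ∀ a ∈ S, e₀ a ∈ S := by
    intro a ha
    obtain ⟨h1, h2⟩ := hz a ha
    exact ⟨(hg _ h1 h2).2.1, (hg _ h1 h2).2.2⟩
  have hfe₀ : ∀ a ∈ S, f (e₀ a) = f u + f v - f a := by
    intro a ha
    obtain ⟨h1, h2⟩ := hz a ha
    exact (hg _ h1 h2).1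
  have he₀inv : ∀ a ∈ S, e₀ (e₀ a) = a := by
    intro a ha
    have h1 : e₀ (e₀ a) = g (f u + f v - f (e₀ a)) := rfl
    rw [h1, hfe₀ a ha]
    have e : f u + f v - (f u + f v - f a) = f a := by abel
    rw [e]
    exact hgf a ha.1 ha.2
  have he₀iso : ∀ a ∈ S, ∀ b ∈ S, ‖e₀ a - e₀ b‖ = ‖a - b‖ := by
    intro a ha b hb
    obtain ⟨ha1, ha2⟩ := hz a ha
    obtain ⟨hb1, hb2⟩ := hz b hb
    have h1 : ‖e₀ a - e₀ b‖ = ‖(f u + f v - f a) - (f u + f v - f b)‖ :=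
      hgiso _ _ ha1 ha2 hb1 hb2
    have e : (f u + f v - f a) - (f u + f v - f b) = -(f a - f b) := by abel
    rw [h1, e, norm_neg, hf a b (hSm a ha) (hSm b hb)]
  -- the sup argument
  set A : Set ℝ := {d | ∃ e : X → X, (∀ a ∈ S, e a ∈ S) ∧
    (∀ a ∈ S, ∀ b ∈ S, ‖e a - e b‖ = ‖a - b‖) ∧ Set.SurjOn e S S ∧ d = ‖e m - m‖} with hA
  have hA0 : (0 : ℝ) ∈ A := by
    refine ⟨id, fun a ha => ha, fun a _ b _ => rfl, ?_, by simp⟩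
    intro a ha; exact ⟨a, ha, rfl⟩
  have hAbdd : BddAbove A := by
    refine ⟨2 * τ, ?_⟩
    rintro d ⟨e, heS, _, _, rfl⟩
    have h1 : e m ∈ S := heS m hmS
    calc ‖e m - m‖ ≤ ‖e m - u‖ + ‖u - m‖ := norm_sub_le_norm_sub_add_norm_sub _ _ _
      _ ≤ τ + τ := add_le_add h1.1 (by rw [norm_sub_rev]; exact le_of_eq hmu)
      _ = 2 * τ := by ring
  have hsum : u + v = (2 : ℝ) • m := by rw [hm]; module
  have hdouble : ∀ d ∈ A, 2 * d ∈ A := by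
    rintro d ⟨e, heS, heiso, hesurj, rfl⟩
    set ei := Function.invFunOn e S with hei
    have heieq : ∀ b ∈ S, e (ei b) = b := by
      intro b hb
      exact Function.invFunOn_eq (hesurj hb)
    have heimem : ∀ b ∈ S, ei b ∈ S := by
      intro b hb
      exact Function.invFunOn_mem (hesurj hb)
    have heiiso : ∀ a ∈ S, ∀ b ∈ S, ‖ei a - ei b‖ = ‖a - b‖ := by
      intro a ha b hb
      rw [← heiso _ (heimem a ha) _ (heimem b hb), heieq a ha, heieq b hb]
    have heinj : ∀ a ∈ S, ∀ b ∈ S, e a = e b → a = b := by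
      intro a ha b hb hab
      have := heiso a ha b hb
      rw [hab, sub_self, norm_zero] at this
      exact sub_eq_zero.mp (norm_eq_zero.mp this.symm)
    have heie : ∀ a ∈ S, ei (e a) = a := by
      intro a ha
      exact heinj _ (heimem _ (heS a ha)) _ ha (heieq _ (heS a ha))
    set σ : X → X := fun p => u + v - p with hσ
    have hσS : ∀ p ∈ S, σ p ∈ S := by
      intro p hp
      constructor
      · have e1 : σ p - u = -(p - v) := by rw [hσ]; beta_reduce; abel
        rw [e1, norm_neg]; exact hp.2
      · have e1 : σ p - v = -(p - u) := by rw [hσ]; beta_reduce; abel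
        rw [e1, norm_neg]; exact hp.1
    have hσiso : ∀ p q : X, ‖σ p - σ q‖ = ‖p - q‖ := by
      intro p q
      have e1 : σ p - σ q = -(p - q) := by rw [hσ]; beta_reduce; abel
      rw [e1, norm_neg]
    have hσinv : ∀ p, σ (σ p) = p := by intro p; rw [hσ]; simp
    set e' : X → X := fun p => σ (ei (σ (e p))) with he'
    have he'S : ∀ a ∈ S, e' a ∈ S := fun a ha => hσS _ (heimem _ (hσS _ (heS a ha)))
    have he'iso : ∀ a ∈ S, ∀ b ∈ S, ‖e' a - e' b‖ = ‖a - b‖ := by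
      intro a ha b hb
      rw [he']
      simp only
      rw [hσiso, heiiso _ (hσS _ (heS a ha)) _ (hσS _ (heS b hb)), hσiso,
        heiso a ha b hb]
    have he'surj : Set.SurjOn e' S S := by
      intro b hb
      refine ⟨ei (σ (e (σ b))), heimem _ (hσS _ (heS _ (hσS b hb))), ?_⟩
      rw [he']
      simp only
      rw [heieq _ (hσS _ (heS _ (hσS b hb))), hσinv, heie _ (hσS b hb), hσinv]
    refine ⟨e', he'S, he'iso, he'surj, ?_⟩
    -- compute the displacement
    have hp : e m ∈ S := heS m hmS
    have hq : ei (σ (e m)) ∈ S := heimem _ (hσS _ hp)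
    have h1 : e' m = σ (ei (σ (e m))) := rfl
    have h2 : ‖e' m - m‖ = ‖m - ei (σ (e m))‖ := by
      rw [h1]
      have e1 : σ (ei (σ (e m))) - m = m - ei (σ (e m)) := by
        rw [hσ]
        simp only
        rw [hsum]; module
      rw [e1]
    have h3 : ‖m - ei (σ (e m))‖ = ‖e m - σ (e m)‖ := by
      rw [← heiso _ hmS _ hq, heieq _ (hσS _ hp)]
    have h4 : e m - σ (e m) = (2 : ℝ) • (e m - m) := by
      rw [hσ]
      simp only
      rw [hsum]; module
    rw [h2, h3, h4, norm_smul, Real.norm_eq_abs]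
    norm_num
  -- conclude sup ≤ 0 and hence all elements are 0
  have hAle : ∀ d ∈ A, d ≤ 0 := by
    set M := sSup A with hM
    have hle : ∀ d ∈ A, d ≤ M / 2 := by
      intro d hd
      have := le_csSup hAbdd (hdouble d hd)
      linarith
    have hMle : M ≤ M / 2 := by
      apply csSup_le ⟨0, hA0⟩
      exact hle
    intro d hd
    have := le_csSup hAbdd hd
    linarith
  -- apply to e₀
  have he₀surj : Set.SurjOn e₀ S S := by
    intro b hb
    exact ⟨e₀ b, he₀S b hb, he₀inv b hb⟩
  have hd₀ : ‖e₀ m - m‖ ∈ A := ⟨e₀, he₀S, he₀iso, he₀surj, rfl⟩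
  have hd₀0 : ‖e₀ m - m‖ = 0 :=
    le_antisymm (hAle _ hd₀) (norm_nonneg _)
  have he₀m : e₀ m = m := sub_eq_zero.mp (norm_eq_zero.mp hd₀0)
  -- finish
  have hfm : f (e₀ m) = f u + f v - f m := hfe₀ m hmS
  rw [he₀m] at hfm
  have : (2 : ℝ) • f m = f u + f v := by
    have e1 : f m + f m = f u + f v := by
      nth_rewrite 1 [hfm]; abel
    rw [two_smul]; exact e1
  have h2 : f m = (1/2 : ℝ) • ((2:ℝ) • f m) := by
    rw [smul_smul]; norm_num
  rw [hm] at this ⊢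
  rw [h2, this]

end MoriAux

set_option maxHeartbeats 1600000 in
/-- Mori's lemma: let `U : X → Y` be a surjection between real Banach spaces which is
isometric on the closed ball `B(x₀, ε x₀)` around each point `x₀`. If for some `x₀` the
image `U(B(x₀, ε x₀))` has non-empty interior, then there is a unique affine isometric map
`Ū : X → Y` agreeing with `U` on `B(x₀, ε x₀)`. -/
theorem mori_lemma_affine_extension
    {X Y : Type*} [NormedAddCommGroup X] [NormedSpace ℝ X] [CompleteSpace X]
    [NormedAddCommGroup Y] [NormedSpace ℝ Y] [CompleteSpace Y]
    (U : X → Y) (hsurj : Function.Surjective U)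
    (ε : X → ℝ) (hεpos : ∀ x₀ : X, 0 < ε x₀)
    (hiso : ∀ x₀ : X, ∀ u ∈ Metric.closedBall x₀ (ε x₀), ∀ v ∈ Metric.closedBall x₀ (ε x₀),
      ‖U u - U v‖ = ‖u - v‖)
    (x₀ : X) (hint : (interior (U '' Metric.closedBall x₀ (ε x₀))).Nonempty) :
    ∃! Ubar : X → Y,
      (∀ x y : X, ∀ t ∈ Set.Icc (0 : ℝ) 1,
        Ubar ((1 - t) • x + t • y) = (1 - t) • Ubar x + t • Ubar y) ∧
      (∀ x y : X, ‖Ubar x - Ubar y‖ = ‖x - y‖) ∧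
      (∀ x ∈ Metric.closedBall x₀ (ε x₀), Ubar x = U x) := by
  classical
  -- pairwise isometry, in norm form
  have hiso' : ∀ c a b : X, ‖a - c‖ ≤ ε c → ‖b - c‖ ≤ ε c → ‖U a - U b‖ = ‖a - b‖ := by
    intro c a b ha hb
    exact hiso c a (by rw [Metric.mem_closedBall, dist_eq_norm]; exact ha)
      b (by rw [Metric.mem_closedBall, dist_eq_norm]; exact hb)
  obtain ⟨y₁, hy₁⟩ := hint
  obtain ⟨r0, hr0pos, hr0⟩ : ∃ r0 > 0, Metric.ball y₁ r0 ⊆ U '' Metric.closedBall x₀ (ε x₀) := by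
    rw [mem_interior_iff_mem_nhds] at hy₁
    exact Metric.mem_nhds_iff.mp hy₁
  set r := r0 / 2 with hrdef
  have hrpos : 0 < r := by positivity
  have hsec : ∀ z : Y, ‖z - y₁‖ ≤ r → ∃ x : X, ‖x - x₀‖ ≤ ε x₀ ∧ U x = z := by
    intro z hz
    have h1 : z ∈ Metric.ball y₁ r0 := by
      rw [Metric.mem_ball, dist_eq_norm]
      calc ‖z - y₁‖ ≤ r := hz
        _ < r0 := by rw [hrdef]; linarith
    obtain ⟨x, hx1, hx2⟩ := hr0 h1
    exact ⟨x, by rwa [Metric.mem_closedBall, dist_eq_norm] at hx1, hx2⟩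
  choose! g hgmem hgval using hsec
  have hgiso : ∀ z z' : Y, ‖z - y₁‖ ≤ r → ‖z' - y₁‖ ≤ r → ‖g z - g z'‖ = ‖z - z'‖ := by
    intro z z' hz hz'
    have h := hiso' x₀ (g z) (g z') (hgmem z hz) (hgmem z' hz')
    rw [hgval z hz, hgval z' hz'] at h
    exact h.symm
  set x₁ := g y₁ with hx₁def
  have hy₁r : ‖y₁ - y₁‖ ≤ r := by rw [sub_self, norm_zero]; exact hrpos.le
  have hUx₁ : U x₁ = y₁ := hgval y₁ hy₁r
  set s₁ := min r (ε x₁) with hs₁def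
  have hs₁pos : 0 < s₁ := lt_min hrpos (hεpos x₁)
  have hs₁r : s₁ ≤ r := min_le_left _ _
  have hs₁ε : s₁ ≤ ε x₁ := min_le_right _ _
  have hUnorm : ∀ a b : X, ‖a - x₁‖ ≤ ε x₁ → ‖b - x₁‖ ≤ ε x₁ → ‖U a - U b‖ = ‖a - b‖ :=
    fun a b ha hb => hiso' x₁ a b ha hb
  have hx₁self : ‖x₁ - x₁‖ ≤ ε x₁ := by rw [sub_self, norm_zero]; exact (hεpos x₁).le
  have hUy : ∀ a : X, ‖a - x₁‖ ≤ ε x₁ → ‖U a - y₁‖ = ‖a - x₁‖ := by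
    intro a ha
    rw [← hUx₁]
    exact hUnorm a x₁ ha hx₁self
  have hgU : ∀ a : X, ‖a - x₁‖ ≤ s₁ → g (U a) = a := by
    intro a ha
    have haε : ‖a - x₁‖ ≤ ε x₁ := le_trans ha hs₁ε
    have h1 : ‖U a - y₁‖ = ‖a - x₁‖ := hUy a haε
    have h2 : ‖U a - y₁‖ ≤ r := by rw [h1]; exact le_trans ha hs₁r
    have h3 : ‖g (U a) - x₁‖ = ‖a - x₁‖ := by
      have h := hgiso (U a) y₁ h2 hy₁r
      rw [h1] at h
      exact h
    have h4 : U (g (U a)) = U a := hgval (U a) h2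
    have h5 := hUnorm (g (U a)) a (by rw [h3]; exact haε) haε
    rw [h4, sub_self, norm_zero] at h5
    exact sub_eq_zero.mp (norm_eq_zero.mp h5.symm)
  -- midpoint preservation near x₁
  have MP : ∀ a b : X, ‖a - x₁‖ ≤ s₁ / 4 → ‖b - x₁‖ ≤ s₁ / 4 →
      U ((1/2 : ℝ) • (a + b)) = (1/2 : ℝ) • (U a + U b) := by
    intro a b ha hb
    have hab : ‖a - b‖ / 2 ≤ s₁ / 4 := by
      have h1 : ‖a - b‖ ≤ ‖a - x₁‖ + ‖b - x₁‖ := by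
        calc ‖a - b‖ = ‖(a - x₁) - (b - x₁)‖ := by congr 1; abel
          _ ≤ ‖a - x₁‖ + ‖b - x₁‖ := norm_sub_le _ _
      linarith
    have hmx : ‖(1/2 : ℝ) • (a + b) - x₁‖ ≤ s₁ / 4 := by
      have e1 : (1/2 : ℝ) • (a + b) - x₁ = (1/2 : ℝ) • ((a - x₁) + (b - x₁)) := by module
      rw [e1, norm_smul, Real.norm_eq_abs, abs_of_nonneg (by norm_num : (0:ℝ) ≤ 1/2)]
      have := norm_add_le (a - x₁) (b - x₁)
      linarith
    have hUay : ‖U a - y₁‖ ≤ s₁ / 4 := by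
      rw [hUy a (le_trans ha (by linarith [hs₁pos]))]
      exact ha
    have hUby : ‖U b - y₁‖ ≤ s₁ / 4 := by
      rw [hUy b (le_trans hb (by linarith [hs₁pos]))]
      exact hb
    apply mori_lens U g a b
    · -- hf
      intro p q hp hq
      apply hUnorm
      · calc ‖p - x₁‖ ≤ ‖p - (1/2 : ℝ) • (a + b)‖ + ‖(1/2 : ℝ) • (a + b) - x₁‖ :=
              norm_sub_le_norm_sub_add_norm_sub _ _ _
          _ ≤ s₁/4 + s₁/4 := add_le_add (le_trans hp hab) hmx
          _ ≤ ε x₁ := by linarith [hs₁ε, hs₁pos]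
      · calc ‖q - x₁‖ ≤ ‖q - (1/2 : ℝ) • (a + b)‖ + ‖(1/2 : ℝ) • (a + b) - x₁‖ :=
              norm_sub_le_norm_sub_add_norm_sub _ _ _
          _ ≤ s₁/4 + s₁/4 := add_le_add (le_trans hq hab) hmx
          _ ≤ ε x₁ := by linarith [hs₁ε, hs₁pos]
    · -- hg
      intro z hz1 hz2
      have hzr : ‖z - y₁‖ ≤ r := by
        calc ‖z - y₁‖ ≤ ‖z - U a‖ + ‖U a - y₁‖ := norm_sub_le_norm_sub_add_norm_sub _ _ _
          _ ≤ s₁/4 + s₁/4 := add_le_add (le_trans hz1 hab) hUay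
          _ ≤ r := by linarith [hs₁r, hs₁pos]
      have hUar : ‖U a - y₁‖ ≤ r := le_trans hUay (by linarith [hs₁r, hs₁pos])
      have hUbr : ‖U b - y₁‖ ≤ r := le_trans hUby (by linarith [hs₁r, hs₁pos])
      refine ⟨hgval z hzr, ?_, ?_⟩
      · have h1 : ‖g z - g (U a)‖ = ‖z - U a‖ := hgiso z (U a) hzr hUar
        rw [hgU a (le_trans ha (by linarith [hs₁pos]))] at h1
        rw [h1]; exact hz1
      · have h1 : ‖g z - g (U b)‖ = ‖z - U b‖ := hgiso z (U b) hzr hUbr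
        rw [hgU b (le_trans hb (by linarith [hs₁pos]))] at h1
        rw [h1]; exact hz2
    · -- hgiso
      intro z z' hz1 hz2 hz1' hz2'
      apply hgiso
      · calc ‖z - y₁‖ ≤ ‖z - U a‖ + ‖U a - y₁‖ := norm_sub_le_norm_sub_add_norm_sub _ _ _
          _ ≤ s₁/4 + s₁/4 := add_le_add (le_trans hz1 hab) hUay
          _ ≤ r := by linarith [hs₁r, hs₁pos]
      · calc ‖z' - y₁‖ ≤ ‖z' - U a‖ + ‖U a - y₁‖ := norm_sub_le_norm_sub_add_norm_sub _ _ _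
          _ ≤ s₁/4 + s₁/4 := add_le_add (le_trans hz1' hab) hUay
          _ ≤ r := by linarith [hs₁r, hs₁pos]
    · -- hgf
      intro p hp1 hp2
      apply hgU
      calc ‖p - x₁‖ ≤ ‖p - a‖ + ‖a - x₁‖ := norm_sub_le_norm_sub_add_norm_sub _ _ _
        _ ≤ s₁/4 + s₁/4 := add_le_add (le_trans hp1 hab) ha
        _ ≤ s₁ := by linarith [hs₁pos]
  -- construction of the linear part
  set ρ := s₁ / 4 with hρdef
  have hρpos : 0 < ρ := by positivity
  have hρε : ρ ≤ ε x₁ := by rw [hρdef]; linarith [hs₁ε, hs₁pos]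
  have hρr : ρ ≤ r := by rw [hρdef]; linarith [hs₁r, hs₁pos]
  have hex : ∀ v : X, ∃ n : ℕ, ‖v‖ ≤ 2 ^ n * ρ := by
    intro v
    obtain ⟨n, hn⟩ := pow_unbounded_of_one_lt (‖v‖ / ρ) (by norm_num : (1:ℝ) < 2)
    refine ⟨n, ?_⟩
    rw [div_lt_iff₀ hρpos] at hn
    calc ‖v‖ ≤ 2 ^ n * ρ := by linarith
      _ = 2 ^ n * ρ := rfl
  choose N hN using hex
  set Lex : ℕ → X → Y := fun n v => ((2:ℝ) ^ n) • (U (x₁ + ((2:ℝ) ^ n)⁻¹ • v) - y₁) with hLex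
  have hball : ∀ (n : ℕ) (v : X), ‖v‖ ≤ 2 ^ n * ρ → ‖(x₁ + ((2:ℝ) ^ n)⁻¹ • v) - x₁‖ ≤ ρ := by
    intro n v hv
    have e1 : (x₁ + ((2:ℝ) ^ n)⁻¹ • v) - x₁ = ((2:ℝ) ^ n)⁻¹ • v := by abel
    rw [e1, norm_smul, Real.norm_eq_abs, abs_inv, abs_of_pos (by positivity : (0:ℝ) < 2 ^ n)]
    rw [inv_mul_le_iff₀ (by positivity : (0:ℝ) < 2 ^ n)]
    exact_mod_cast hv
  have hstep : ∀ (n : ℕ) (v : X), ‖v‖ ≤ 2 ^ n * ρ → Lex (n + 1) v = Lex n v := by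
    intro n v hv
    have hbx := hball n v hv
    have hmid : x₁ + ((2:ℝ) ^ (n+1))⁻¹ • v = (1/2 : ℝ) • (x₁ + (x₁ + ((2:ℝ) ^ n)⁻¹ • v)) := by
      rw [pow_succ, mul_inv]
      module
    have h1 := MP x₁ (x₁ + ((2:ℝ) ^ n)⁻¹ • v) (by rw [sub_self, norm_zero]; exact hρpos.le) hbx
    rw [hLex]
    simp only
    rw [hmid, h1, hUx₁, pow_succ]
    module
  have hmono : ∀ (n : ℕ) (v : X), ‖v‖ ≤ 2 ^ n * ρ → ∀ m : ℕ, n ≤ m → Lex m v = Lex n v := by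
    intro n v hv m hm
    induction m, hm using Nat.le_induction with
    | base => rfl
    | succ m hm ih =>
      rw [← ih]
      rw [hstep m v ?_]
      calc ‖v‖ ≤ 2 ^ n * ρ := hv
        _ ≤ 2 ^ m * ρ := by
          apply mul_le_mul_of_nonneg_right _ hρpos.le
          apply pow_le_pow_right₀ (by norm_num : (1:ℝ) ≤ 2) hm
  clear_value Lex
  set L : X → Y := fun v => Lex (N v) v with hLdef
  have hLeq : ∀ (v : X) (n : ℕ), ‖v‖ ≤ 2 ^ n * ρ → L v = Lex n v := by
    intro v n hn
    rw [hLdef]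
    simp only
    rcases le_total (N v) n with h | h
    · exact (hmono (N v) v (hN v) n h).symm
    · exact hmono n v hn (N v) h
  have hLball : ∀ v : X, ‖v‖ ≤ ρ → L v = U (x₁ + v) - y₁ := by
    intro v hv
    rw [hLeq v 0 (by simpa using hv)]
    rw [hLex]
    norm_num
  have hLiso : ∀ v w : X, ‖L v - L w‖ = ‖v - w‖ := by
    intro v w
    set n := max (N v) (N w) with hn
    have hvn : ‖v‖ ≤ 2 ^ n * ρ := le_trans (hN v) (by
      apply mul_le_mul_of_nonneg_right _ hρpos.le
      apply pow_le_pow_right₀ (by norm_num : (1:ℝ) ≤ 2) (le_max_left _ _))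
    have hwn : ‖w‖ ≤ 2 ^ n * ρ := le_trans (hN w) (by
      apply mul_le_mul_of_nonneg_right _ hρpos.le
      apply pow_le_pow_right₀ (by norm_num : (1:ℝ) ≤ 2) (le_max_right _ _))
    rw [hLeq v n hvn, hLeq w n hwn, hLex]
    simp only
    rw [← smul_sub, norm_smul, Real.norm_eq_abs, abs_of_pos (by positivity : (0:ℝ) < 2 ^ n)]
    have e1 : (U (x₁ + ((2:ℝ) ^ n)⁻¹ • v) - y₁) - (U (x₁ + ((2:ℝ) ^ n)⁻¹ • w) - y₁)
        = U (x₁ + ((2:ℝ) ^ n)⁻¹ • v) - U (x₁ + ((2:ℝ) ^ n)⁻¹ • w) := by abel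
    rw [e1, hUnorm _ _ (le_trans (hball n v hvn) hρε) (le_trans (hball n w hwn) hρε)]
    have e2 : (x₁ + ((2:ℝ) ^ n)⁻¹ • v) - (x₁ + ((2:ℝ) ^ n)⁻¹ • w) = ((2:ℝ) ^ n)⁻¹ • (v - w) := by
      rw [smul_sub]; abel
    rw [e2, norm_smul, Real.norm_eq_abs, abs_inv, abs_of_pos (by positivity : (0:ℝ) < 2 ^ n)]
    rw [← mul_assoc]
    rw [mul_inv_cancel₀ (by positivity : ((2:ℝ) ^ n) ≠ 0), one_mul]
  have hL0 : L 0 = 0 := by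
    rw [hLball 0 (by rw [norm_zero]; exact hρpos.le)]
    rw [add_zero, hUx₁, sub_self]
  have hLnorm : ∀ v : X, ‖L v‖ = ‖v‖ := by
    intro v
    have := hLiso v 0
    rwa [hL0, sub_zero, sub_zero] at this
  have hLmid : ∀ v w : X, L ((1/2 : ℝ) • (v + w)) = (1/2 : ℝ) • (L v + L w) := by
    intro v w
    set n := max (N v) (N w) with hn
    have hvn : ‖v‖ ≤ 2 ^ n * ρ := le_trans (hN v) (by
      apply mul_le_mul_of_nonneg_right _ hρpos.le
      apply pow_le_pow_right₀ (by norm_num : (1:ℝ) ≤ 2) (le_max_left _ _))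
    have hwn : ‖w‖ ≤ 2 ^ n * ρ := le_trans (hN w) (by
      apply mul_le_mul_of_nonneg_right _ hρpos.le
      apply pow_le_pow_right₀ (by norm_num : (1:ℝ) ≤ 2) (le_max_right _ _))
    have hmn : ‖(1/2 : ℝ) • (v + w)‖ ≤ 2 ^ n * ρ := by
      rw [norm_smul, Real.norm_eq_abs, abs_of_nonneg (by norm_num : (0:ℝ) ≤ 1/2)]
      have := norm_add_le v w
      nlinarith [norm_nonneg v, norm_nonneg w]
    rw [hLeq _ n hmn, hLeq v n hvn, hLeq w n hwn, hLex]
    simp only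
    have e1 : x₁ + ((2:ℝ) ^ n)⁻¹ • ((1/2 : ℝ) • (v + w))
        = (1/2 : ℝ) • ((x₁ + ((2:ℝ) ^ n)⁻¹ • v) + (x₁ + ((2:ℝ) ^ n)⁻¹ • w)) := by module
    rw [e1, MP _ _ (hball n v hvn) (hball n w hwn)]
    module
  have hLadd : ∀ v w : X, L (v + w) = L v + L w := by
    intro v w
    have h1 := hLmid (v + w) 0
    rw [hL0, add_zero, add_zero] at h1
    have h2 := hLmid v w
    have h3 : (1/2 : ℝ) • L (v + w) = (1/2 : ℝ) • (L v + L w) := by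
      rw [← h1, ← h2]
    have h4 := congrArg (fun q : Y => (2:ℝ) • q) h3
    simp only [smul_smul] at h4
    norm_num at h4
    exact h4
  have hLcont : Continuous L := by
    have hlip : LipschitzWith 1 L := by
      apply LipschitzWith.of_dist_le_mul
      intro a b
      rw [dist_eq_norm, dist_eq_norm, hLiso]
      simp
    exact hlip.continuous
  set Lhom : X →+ Y := AddMonoidHom.mk' L hLadd with hLhom
  set Llin : X →L[ℝ] Y := Lhom.toRealLinearMap (by exact hLcont) with hLlin
  have hLlineq : ∀ v : X, Llin v = L v := by
    intro v
    rw [hLlin]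
    rfl
  have hinj : Function.Injective Llin.toLinearMap := by
    intro a b hab
    simp only [ContinuousLinearMap.coe_coe] at hab
    have h1 : ‖L a - L b‖ = 0 := by
      rw [← hLlineq, ← hLlineq, hab, sub_self, norm_zero]
    rw [hLiso] at h1
    exact sub_eq_zero.mp (norm_eq_zero.mp h1)
  have hLsub : ∀ y : Y, ‖y‖ ≤ ρ → ∃ x : X, L x = y := by
    intro y hy
    have h1 : ‖(y₁ + y) - y₁‖ ≤ r := by
      rw [add_sub_cancel_left]
      exact le_trans hy hρr
    have ha : U (g (y₁ + y)) = y₁ + y := hgval _ h1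
    have hax : ‖g (y₁ + y) - x₁‖ ≤ ρ := by
      have h2 := hgiso (y₁ + y) y₁ h1 hy₁r
      rw [add_sub_cancel_left] at h2
      rw [h2]
      exact hy
    refine ⟨g (y₁ + y) - x₁, ?_⟩
    rw [hLball _ hax]
    have e1 : x₁ + (g (y₁ + y) - x₁) = g (y₁ + y) := by abel
    rw [e1, ha]
    abel
  have hsurjL : Function.Surjective Llin.toLinearMap := by
    intro y
    rcases eq_or_ne y 0 with rfl | hy0
    · exact ⟨0, by simp⟩
    · have hny : 0 < ‖y‖ := norm_pos_iff.mpr hy0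
      obtain ⟨x, hx⟩ := hLsub ((ρ / ‖y‖) • y) (by
        rw [norm_smul, Real.norm_eq_abs, abs_of_pos (by positivity)]
        rw [div_mul_cancel₀ _ hny.ne']
        )
      refine ⟨(‖y‖ / ρ) • x, ?_⟩
      rw [map_smul]
      simp only [ContinuousLinearMap.coe_coe]
      rw [hLlineq, hx, smul_smul]
      rw [div_mul_div_comm, mul_comm ‖y‖ ρ, div_self (by positivity), one_smul]
  clear_value L
  set e := LinearEquiv.ofBijective Llin.toLinearMap (by exact ⟨hinj, hsurjL⟩) with hedef
  have heL : ∀ v : X, e v = L v := by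
    intro v
    rw [hedef]
    show Llin.toLinearMap v = L v
    simp only [ContinuousLinearMap.coe_coe]
    exact hLlineq v
  set Ub : X → Y := fun x => y₁ + e (x - x₁) with hUbdef
  have hUbagree : ∀ z : X, ‖z - x₁‖ ≤ ρ → U z = Ub z := by
    intro z hz
    rw [hUbdef]
    simp only
    rw [heL, hLball _ hz]
    have e1 : x₁ + (z - x₁) = z := by abel
    rw [e1]
    abel
  have hUbiso : ∀ a b : X, ‖Ub a - Ub b‖ = ‖a - b‖ := by
    intro a b
    rw [hUbdef]
    simp only
    have e1 : (y₁ + e (a - x₁)) - (y₁ + e (b - x₁)) = e (a - x₁) - e (b - x₁) := by abel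
    rw [e1, heL, heL, hLiso]
    congr 1
    abel
  have hsymmnorm : ∀ y : Y, ‖e.symm y‖ = ‖y‖ := by
    intro y
    conv_rhs => rw [← e.apply_symm_apply y]
    rw [heL, hLnorm]
  clear_value e Ub
  -- growth of the agreement region
  have growth : ∀ (zc c : X) (τ : ℝ), 0 < τ →
      (∀ p : X, ‖p - zc‖ ≤ (9/8) * τ → ‖p - c‖ ≤ ε c) →
      (∀ x : X, ‖x - zc‖ ≤ τ → U x = Ub x) →
      ∀ p : X, ‖p - zc‖ ≤ (9/8) * τ → U p = Ub p := by
    intro zc c τ hτ hin hag p hp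
    set p' := x₁ + e.symm (U p - y₁) with hp'
    have hpr : ∀ x : X, ‖x - zc‖ ≤ τ → ‖p' - x‖ = ‖p - x‖ := by
      intro x hx
      have hx9 : ‖x - zc‖ ≤ (9/8) * τ := le_trans hx (by linarith)
      have hUpx : ‖U p - U x‖ = ‖p - x‖ := hiso' c p x (hin p hp) (hin x hx9)
      have hUbx : U x = y₁ + e (x - x₁) := by rw [hag x hx, hUbdef]
      calc ‖p' - x‖ = ‖e.symm (U p - y₁) - (x - x₁)‖ := by rw [hp']; congr 1; abel
        _ = ‖e.symm (U p - y₁) - e.symm (e (x - x₁))‖ := by rw [e.symm_apply_apply]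
        _ = ‖e.symm ((U p - y₁) - e (x - x₁))‖ := by rw [← map_sub]
        _ = ‖(U p - y₁) - e (x - x₁)‖ := hsymmnorm _
        _ = ‖U p - (y₁ + e (x - x₁))‖ := by congr 1; abel
        _ = ‖U p - U x‖ := by rw [← hUbx]
        _ = ‖p - x‖ := hUpx
    have hpe := mori_msr τ hτ zc p p' hp hpr
    have h3 : x₁ + e.symm (U p - y₁) = p := by rw [← hp', hpe]
    have h4 : e.symm (U p - y₁) = p - x₁ := eq_sub_of_add_eq (by rw [add_comm]; exact h3)
    have h5 := congrArg e h4
    rw [e.apply_symm_apply] at h5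
    rw [hUbdef]
    simp only
    rw [← h5]
    abel
  -- iteration of growth
  have iter : ∀ (zc c : X) (R : ℝ), 0 < R →
      (∀ p : X, ‖p - zc‖ ≤ (9/8) * R → ‖p - c‖ ≤ ε c) →
      (∃ ρ' > 0, ∀ x : X, ‖x - zc‖ ≤ ρ' → U x = Ub x) →
      ∀ x : X, ‖x - zc‖ ≤ R → U x = Ub x := by
    intro zc c R hR hin hag
    obtain ⟨ρ', hρ'pos, hag'⟩ := hag
    have key : ∀ k : ℕ, ∀ x : X, ‖x - zc‖ ≤ min (ρ' * (9/8) ^ k) R → U x = Ub x := by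
      intro k
      induction k with
      | zero =>
        intro x hx
        apply hag'
        calc ‖x - zc‖ ≤ min (ρ' * (9/8) ^ 0) R := hx
          _ ≤ ρ' * (9/8) ^ 0 := min_le_left _ _
          _ = ρ' := by norm_num
      | succ k ih =>
        intro x hx
        set τk := min (ρ' * (9/8) ^ k) R with hτk
        have hτkpos : 0 < τk := lt_min (by positivity) hR
        have hτkR : τk ≤ R := min_le_right _ _
        have hin' : ∀ p : X, ‖p - zc‖ ≤ (9/8) * τk → ‖p - c‖ ≤ ε c := by
          intro p hp
          apply hin
          calc ‖p - zc‖ ≤ (9/8) * τk := hp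
            _ ≤ (9/8) * R := by linarith
        have hgrow := growth zc c τk hτkpos hin' ih
        apply hgrow
        calc ‖x - zc‖ ≤ min (ρ' * (9/8) ^ (k+1)) R := hx
          _ ≤ (9/8) * τk := by
            rw [hτk]
            rcases le_total (ρ' * (9/8) ^ k) R with h | h
            · rw [min_eq_left h]
              calc min (ρ' * (9/8) ^ (k+1)) R ≤ ρ' * (9/8) ^ (k+1) := min_le_left _ _
                _ = (9/8) * (ρ' * (9/8) ^ k) := by ring
            · rw [min_eq_right h]
              calc min (ρ' * (9/8) ^ (k+1)) R ≤ R := min_le_right _ _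
                _ ≤ (9/8) * R := by linarith
    intro x hx
    obtain ⟨k, hk⟩ := pow_unbounded_of_one_lt (R / ρ') (by norm_num : (1:ℝ) < 9/8)
    apply key k
    rw [div_lt_iff₀ hρ'pos] at hk
    rw [min_eq_right (by nlinarith)]
    exact hx
  -- the agreement set is clopen
  set F : Set X := {x | ∃ ρ' > 0, ∀ z : X, ‖z - x‖ ≤ ρ' → U z = Ub z} with hF
  have hFopen : IsOpen F := by
    rw [Metric.isOpen_iff]
    rintro x ⟨ρ', hρ'pos, hag⟩
    refine ⟨ρ' / 2, by positivity, ?_⟩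
    intro x' hx'
    rw [Metric.mem_ball, dist_eq_norm] at hx'
    refine ⟨ρ' / 2, by positivity, ?_⟩
    intro z hz
    apply hag
    calc ‖z - x‖ ≤ ‖z - x'‖ + ‖x' - x‖ := norm_sub_le_norm_sub_add_norm_sub _ _ _
      _ ≤ ρ' / 2 + ρ' / 2 := add_le_add hz hx'.le
      _ = ρ' := by ring
  have hFclosed : IsClosed F := by
    rw [← closure_subset_iff_isClosed]
    intro x hx
    set εx := ε x with hεx
    have hεxpos : 0 < εx := hεpos x
    rw [Metric.mem_closure_iff] at hx
    obtain ⟨x', hx'F, hx'd⟩ := hx (εx / 16) (by positivity)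
    rw [dist_eq_norm] at hx'd
    have hagree : ∀ z : X, ‖z - x'‖ ≤ εx / 4 → U z = Ub z := by
      apply iter x' x (εx / 4) (by positivity)
      · intro p hp
        calc ‖p - x‖ ≤ ‖p - x'‖ + ‖x' - x‖ := norm_sub_le_norm_sub_add_norm_sub _ _ _
          _ ≤ (9/8) * (εx/4) + εx/16 := by
            refine add_le_add hp ?_
            rw [norm_sub_rev]
            exact hx'd.le
          _ ≤ εx := by linarith
      · exact hx'F
    refine ⟨εx / 8, by positivity, ?_⟩
    intro z hz
    apply hagree
    calc ‖z - x'‖ ≤ ‖z - x‖ + ‖x - x'‖ := norm_sub_le_norm_sub_add_norm_sub _ _ _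
      _ ≤ εx/8 + εx/16 := add_le_add hz hx'd.le
      _ ≤ εx/4 := by linarith
  have hFne : F.Nonempty := by
    refine ⟨x₁, ρ, hρpos, ?_⟩
    intro z hz
    exact hUbagree z hz
  haveI : PreconnectedSpace X := by
    constructor
    exact (convex_univ : Convex ℝ (Set.univ : Set X)).isPreconnected
  have hFuniv : F = Set.univ := IsClopen.eq_univ ⟨hFclosed, hFopen⟩ hFne
  have hUUb : ∀ x : X, U x = Ub x := by
    intro x
    have hxF : x ∈ F := by rw [hFuniv]; trivial
    obtain ⟨ρ', hρ'pos, hag⟩ := hxF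
    apply hag
    rw [sub_self, norm_zero]
    exact hρ'pos.le
  -- assemble the result
  refine ⟨Ub, ⟨?_, ?_, ?_⟩, ?_⟩
  · -- affine
    intro x y t _
    rw [hUbdef]
    simp only
    have e1 : (1 - t) • x + t • y - x₁ = (1 - t) • (x - x₁) + t • (y - x₁) := by module
    rw [e1, map_add, map_smul, map_smul]
    module
  · -- isometric
    intro x y
    exact hUbiso x y
  · -- agrees with U on the ball
    intro x _
    exact (hUUb x).symm
  · -- uniqueness
    rintro W ⟨hWaff, hWiso, hWagree⟩
    funext w
    rcases eq_or_ne w x₀ with rfl | hw0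
    · rw [hWagree w (Metric.mem_closedBall_self (hεpos w).le), hUUb w]
    · have hnw : 0 < ‖w - x₀‖ := by
        rw [norm_pos_iff, sub_ne_zero]
        exact hw0
      set t := min 1 (ε x₀ / ‖w - x₀‖) with htdef
      have htpos : 0 < t := lt_min one_pos (div_pos (hεpos x₀) hnw)
      have ht1 : t ≤ 1 := min_le_left _ _
      have htIcc : t ∈ Set.Icc (0:ℝ) 1 := ⟨htpos.le, ht1⟩
      have hp : (1 - t) • x₀ + t • w ∈ Metric.closedBall x₀ (ε x₀) := by
        rw [Metric.mem_closedBall, dist_eq_norm]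
        have e1 : (1 - t) • x₀ + t • w - x₀ = t • (w - x₀) := by module
        rw [e1, norm_smul, Real.norm_eq_abs, abs_of_pos htpos]
        calc t * ‖w - x₀‖ ≤ (ε x₀ / ‖w - x₀‖) * ‖w - x₀‖ :=
              mul_le_mul_of_nonneg_right (min_le_right _ _) hnw.le
          _ = ε x₀ := by field_simp
      have hx₀B : x₀ ∈ Metric.closedBall x₀ (ε x₀) := Metric.mem_closedBall_self (hεpos x₀).le
      have h1 := hWaff x₀ w t htIcc
      have h2 : U ((1 - t) • x₀ + t • w) = (1 - t) • U x₀ + t • Ub w := by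
        rw [hUUb ((1 - t) • x₀ + t • w), hUbdef]
        simp only
        have e1 : (1 - t) • x₀ + t • w - x₁ = (1 - t) • (x₀ - x₁) + t • (w - x₁) := by module
        rw [e1, map_add, map_smul, map_smul]
        rw [hUUb x₀, hUbdef]
        simp only
        module
      rw [hWagree _ hp, hWagree _ hx₀B] at h1
      rw [h2] at h1
      have h3 : t • Ub w = t • W w := by
        apply_fun (fun q : Y => q - (1 - t) • U x₀) at h1
        simpa using h1
      exact ((smul_right_injective Y htpos.ne' h3).symm)
end

section
/- Let X and Y be real Banach spaces, let x₀ ∈ X, y₀ ∈ Y, r > 0, and let f : B(x₀, r) → B(y₀, r) be a surjective map between the closed balls satisfying ‖f(u) − f(v)‖ = ‖u − v‖ for all u, v ∈ B(x₀, r). Then there exists a unique affine isometry F : X → Y (i.e. F is surjective, F((1−t)x + t y) = (1−t)F(x) + t F(y) for all x, y ∈ X, t ∈ [0,1], and ‖F(x) − F(y)‖ = ‖x − y‖ for all x, y ∈ X) whose restriction to B(x₀, r) equals f. -/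
open Metric Function Filter

namespace Mankiewicz
set_option linter.unusedSectionVars false
set_option linter.unusedVariables false

variable {E F : Type*} [NormedAddCommGroup E] [NormedSpace ℝ E]
  [NormedAddCommGroup F] [NormedSpace ℝ F]

lemma le_zero_of_forall_le_div_pow {c d : ℝ} (h : ∀ n : ℕ, c ≤ d / 2 ^ n) : c ≤ 0 := by
  have ht : Tendsto (fun n : ℕ => d / 2 ^ n) atTop (nhds 0) := by
    have h2 : Tendsto (fun n : ℕ => ((2:ℝ)⁻¹) ^ n) atTop (nhds 0) :=
      tendsto_pow_atTop_nhds_zero_of_lt_one (by norm_num) (by norm_num)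
    simpa [div_eq_mul_inv, inv_pow] using h2.const_mul d
  exact ge_of_tendsto' ht h

/-- Iterated metric midpoint sets. -/
def H (u v : E) : ℕ → Set E
  | 0 => {z | ‖z - u‖ = ‖u - v‖ / 2 ∧ ‖z - v‖ = ‖u - v‖ / 2}
  | n + 1 => {z | z ∈ H u v n ∧ ∀ w ∈ H u v n, ‖z - w‖ ≤ ‖u - v‖ / 2 ^ (n + 1)}

lemma H_zero_dist {u v z : E} (hz : z ∈ H u v 0) :
    ‖z - (2⁻¹ : ℝ) • (u + v)‖ ≤ ‖u - v‖ / 2 := by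
  have hrw : z - (2⁻¹ : ℝ) • (u + v) = (2⁻¹ : ℝ) • ((z - u) + (z - v)) := by module
  rw [hrw, norm_smul]
  have h := norm_add_le (z - u) (z - v)
  rw [hz.1, hz.2] at h
  have : ‖(2⁻¹ : ℝ)‖ = 2⁻¹ := by norm_num [Real.norm_eq_abs]
  rw [this]
  nlinarith [norm_nonneg ((z-u)+(z-v))]

lemma H_diam (u v : E) : ∀ n, ∀ z ∈ H u v n, ∀ w ∈ H u v n, ‖z - w‖ ≤ ‖u - v‖ / 2 ^ n
  | 0, z, hz, w, hw => by
    have h1 := H_zero_dist hz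
    have h2 := H_zero_dist hw
    have h3 : ‖z - w‖ ≤ ‖z - (2⁻¹ : ℝ) • (u + v)‖ + ‖(2⁻¹ : ℝ) • (u + v) - w‖ :=
      norm_sub_le_norm_sub_add_norm_sub z _ w
    rw [norm_sub_rev ((2⁻¹ : ℝ) • (u + v)) w] at h3
    simp only [pow_zero, div_one]
    linarith
  | n+1, z, hz, w, hw => hz.2 w hw.1

lemma H_sigma (u v : E) : ∀ n, ∀ z ∈ H u v n, u + v - z ∈ H u v n
  | 0, z, hz => by
    constructor
    · rw [show u + v - z - u = -(z - v) by abel, norm_neg]; exact hz.2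
    · rw [show u + v - z - v = -(z - u) by abel, norm_neg]; exact hz.1
  | n+1, z, hz => by
    refine ⟨H_sigma u v n z hz.1, fun w hw => ?_⟩
    have h1 : u + v - w ∈ H u v n := H_sigma u v n w hw
    have h2 := hz.2 _ h1
    rw [show u + v - z - w = -(z - (u + v - w)) by abel, norm_neg]
    exact h2

lemma H_mid (u v : E) : ∀ n, (2⁻¹ : ℝ) • (u + v) ∈ H u v n
  | 0 => by
    constructor
    · rw [show (2⁻¹ : ℝ) • (u + v) - u = (2⁻¹ : ℝ) • (v - u) by module, norm_smul,
        norm_sub_rev]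
      norm_num [Real.norm_eq_abs]; ring
    · rw [show (2⁻¹ : ℝ) • (u + v) - v = (2⁻¹ : ℝ) • (u - v) by module, norm_smul]
      norm_num [Real.norm_eq_abs]; ring
  | n+1 => by
    refine ⟨H_mid u v n, fun w hw => ?_⟩
    have h1 : u + v - w ∈ H u v n := H_sigma u v n w hw
    have h2 := H_diam u v n _ h1 _ hw
    have hrw : (2⁻¹ : ℝ) • (u + v) - w = (2⁻¹ : ℝ) • ((u + v - w) - w) := by module
    rw [hrw, norm_smul]
    have : ‖(2⁻¹ : ℝ)‖ = 2⁻¹ := by norm_num [Real.norm_eq_abs]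
    rw [this, pow_succ]
    rw [show ‖u - v‖ / (2 ^ n * 2) = 2⁻¹ * (‖u - v‖ / 2 ^ n) by ring]
    have h4 : (0:ℝ) ≤ 2⁻¹ := by norm_num
    exact mul_le_mul_of_nonneg_left h2 h4

lemma H_inter {u v z : E} (hz : ∀ n, z ∈ H u v n) : z = (2⁻¹ : ℝ) • (u + v) := by
  have key : ∀ n : ℕ, ‖z - (2⁻¹ : ℝ) • (u + v)‖ ≤ ‖u - v‖ / 2 ^ n := fun n =>
    H_diam u v n z (hz n) _ (H_mid u v n)
  have h0 : ‖z - (2⁻¹ : ℝ) • (u + v)‖ ≤ 0 := le_zero_of_forall_le_div_pow key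
  have := le_antisymm h0 (norm_nonneg _)
  rwa [norm_eq_zero, sub_eq_zero] at this

lemma H_subset_zero (u v : E) : ∀ n, H u v n ⊆ H u v 0
  | 0 => subset_rfl
  | n+1 => fun z hz => H_subset_zero u v n hz.1


lemma mid_pres (r : ℝ) (hr : 0 < r) (g : E → F)
    (hsurj : ∀ w : F, ‖w‖ ≤ r → ∃ u : E, ‖u‖ ≤ r ∧ g u = w)
    (hiso : ∀ u : E, ‖u‖ ≤ r → ∀ v : E, ‖v‖ ≤ r → ‖g u - g v‖ = ‖u - v‖)
    (hg0 : g 0 = 0)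
    (u v : E) (hcond : ‖u‖ + ‖v‖ + ‖u - v‖ ≤ 2 * r) :
    g ((2⁻¹ : ℝ) • (u + v)) = (2⁻¹ : ℝ) • (g u + g v) := by
  have hu : ‖u‖ ≤ r := by
    have h1 : ‖u‖ ≤ ‖v‖ + ‖u - v‖ := by
      have := norm_add_le v (u - v); simpa using this
    linarith
  have hv : ‖v‖ ≤ r := by
    have h1 : ‖v‖ ≤ ‖u‖ + ‖u - v‖ := by
      have := norm_sub_le u (u - v); simpa using this
    linarith
  have hnorm : ∀ x : E, ‖x‖ ≤ r → ‖g x‖ = ‖x‖ := fun x hx => by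
    have h := hiso x hx 0 (by simp [hr.le]); simpa [hg0] using h
  have hd : ‖g u - g v‖ = ‖u - v‖ := hiso u hu v hv
  -- all sets stay in the balls
  have hXball : ∀ n, ∀ z ∈ H u v n, ‖z‖ ≤ r := by
    intro n z hz
    have hz0 := H_subset_zero u v n hz
    have h1 := H_zero_dist hz0
    have h2 : ‖(2⁻¹ : ℝ) • (u + v)‖ ≤ (‖u‖ + ‖v‖) / 2 := by
      rw [norm_smul]
      have := norm_add_le u v
      norm_num [Real.norm_eq_abs]
      linarith
    calc ‖z‖ ≤ ‖z - (2⁻¹ : ℝ) • (u + v)‖ + ‖(2⁻¹ : ℝ) • (u + v)‖ := by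
          have := norm_add_le (z - (2⁻¹ : ℝ) • (u + v)) ((2⁻¹ : ℝ) • (u + v))
          simpa using this
      _ ≤ ‖u - v‖ / 2 + (‖u‖ + ‖v‖) / 2 := by linarith
      _ ≤ r := by linarith
  have hYball : ∀ n, ∀ z ∈ H (g u) (g v) n, ‖z‖ ≤ r := by
    intro n z hz
    have hz0 := H_subset_zero (g u) (g v) n hz
    have h1 := H_zero_dist hz0
    have h2 : ‖(2⁻¹ : ℝ) • (g u + g v)‖ ≤ (‖u‖ + ‖v‖) / 2 := by
      rw [norm_smul]
      have h3 := norm_add_le (g u) (g v)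
      rw [hnorm u hu, hnorm v hv] at h3
      norm_num [Real.norm_eq_abs]
      linarith
    rw [hd] at h1
    calc ‖z‖ ≤ ‖z - (2⁻¹ : ℝ) • (g u + g v)‖ + ‖(2⁻¹ : ℝ) • (g u + g v)‖ := by
          have := norm_add_le (z - (2⁻¹ : ℝ) • (g u + g v)) ((2⁻¹ : ℝ) • (g u + g v))
          simpa using this
      _ ≤ ‖u - v‖ / 2 + (‖u‖ + ‖v‖) / 2 := by linarith
      _ ≤ r := by linarith
  have key : ∀ n, ∀ z : E, ‖z‖ ≤ r → (z ∈ H u v n ↔ g z ∈ H (g u) (g v) n) := by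
    intro n
    induction n with
    | zero =>
      intro z hz
      simp only [H, Set.mem_setOf_eq]
      rw [hiso z hz u hu, hiso z hz v hv, hd]
    | succ n ih =>
      intro z hz
      simp only [H, Set.mem_setOf_eq]
      constructor
      · rintro ⟨hz1, hz2⟩
        refine ⟨(ih z hz).1 hz1, ?_⟩
        intro w' hw'
        obtain ⟨w, hwr, rfl⟩ := hsurj w' (hYball n w' hw')
        rw [hiso z hz w hwr, hd]
        exact hz2 w ((ih w hwr).2 hw')
      · rintro ⟨hz1, hz2⟩
        refine ⟨(ih z hz).2 hz1, ?_⟩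
        intro w hw
        have hwr : ‖w‖ ≤ r := hXball n w hw
        have h := hz2 (g w) ((ih w hwr).1 hw)
        rw [hd] at h
        rwa [← hiso z hz w hwr]
  have hmr : ‖(2⁻¹ : ℝ) • (u + v)‖ ≤ r := hXball 0 _ (H_mid u v 0)
  have hgm : ∀ n, g ((2⁻¹ : ℝ) • (u + v)) ∈ H (g u) (g v) n := fun n =>
    (key n _ hmr).1 (H_mid u v n)
  exact H_inter hgm


theorem core (r : ℝ) (hr : 0 < r) (g : E → F)
    (hmaps : ∀ u : E, ‖u‖ ≤ r → ‖g u‖ ≤ r)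
    (hsurj : ∀ w : F, ‖w‖ ≤ r → ∃ u : E, ‖u‖ ≤ r ∧ g u = w)
    (hiso : ∀ u : E, ‖u‖ ≤ r → ∀ v : E, ‖v‖ ≤ r → ‖g u - g v‖ = ‖u - v‖) :
    ∃ L : E →ₗ[ℝ] F, Surjective L ∧ (∀ x y : E, ‖L x - L y‖ = ‖x - y‖) ∧
      (∀ x : E, ‖x‖ ≤ r → L x = g x) := by
  -- the center goes to the center
  have hg0 : g 0 = 0 := by
    by_contra hne
    set c := g 0 with hc
    have hcpos : 0 < ‖c‖ := norm_pos_iff.2 hne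
    set w : F := -((r / ‖c‖) • c) with hw
    have hwr : ‖w‖ ≤ r := by
      rw [hw, norm_neg, norm_smul, Real.norm_eq_abs, abs_of_pos (by positivity)]
      rw [div_mul_cancel₀ _ (ne_of_gt hcpos)]
    obtain ⟨a, har, hga⟩ := hsurj w hwr
    have h1 : ‖g a - g 0‖ = ‖a - 0‖ := hiso a har 0 (by simp [hr.le])
    rw [hga, ← hc] at h1
    have h2 : ‖w - c‖ = r + ‖c‖ := by
      rw [hw, show -((r / ‖c‖) • c) - c = -((r / ‖c‖ + 1) • c) by module, norm_neg,
        norm_smul, Real.norm_eq_abs, abs_of_pos (by positivity), add_mul,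
        div_mul_cancel₀ _ (ne_of_gt hcpos), one_mul]
    have h3 : ‖a - 0‖ ≤ r := by simpa using har
    rw [← h1, h2] at h3
    linarith
  have hnorm : ∀ x : E, ‖x‖ ≤ r → ‖g x‖ = ‖x‖ := fun x hx => by
    have h := hiso x hx 0 (by simp [hr.le]); simpa [hg0] using h
  have mid := mid_pres r hr g hsurj hiso hg0
  obtain ⟨ρ, hρ⟩ : ∃ ρ : ℝ, ρ = r / 2 := ⟨_, rfl⟩
  have hρpos : 0 < ρ := by rw [hρ]; positivity
  have hρr : ρ ≤ r := by rw [hρ]; linarith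
  -- midpoints in the half ball
  have gmid : ∀ a b : E, ‖a‖ ≤ ρ → ‖b‖ ≤ ρ →
      g ((2⁻¹ : ℝ) • (a + b)) = (2⁻¹ : ℝ) • (g a + g b) := by
    intro a b ha hb
    have := norm_sub_le a b
    exact mid a b (by rw [hρ] at ha hb; linarith)
  -- dyadic scalars
  have dyad : ∀ x : E, ‖x‖ ≤ ρ → ∀ n : ℕ, ∀ k : ℕ, k ≤ 2 ^ n →
      g (((k : ℝ) / 2 ^ n) • x) = ((k : ℝ) / 2 ^ n) • g x := by
    intro x hx n
    induction n with
    | zero =>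
      intro k hk
      interval_cases k
      · simp [hg0]
      · simp
    | succ n ih =>
      intro k hk
      have h2 : (2:ℕ) ^ (n+1) = 2 * 2 ^ n := by ring
      rw [h2] at hk
      set a := k / 2 with hadef
      set b := k - k / 2 with hbdef
      have hab : a + b = k := by omega
      have ha2 : a ≤ 2 ^ n := by omega
      have hb2 : b ≤ 2 ^ n := by omega
      have hk' : (a : ℝ) + (b : ℝ) = (k : ℝ) := by exact_mod_cast hab
      have hsc : ((k : ℝ)) / 2 ^ (n+1) = 2⁻¹ * ((a : ℝ) / 2 ^ n + (b : ℝ) / 2 ^ n) := by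
        rw [← hk', pow_succ]; ring
      have hmem : ∀ j : ℕ, j ≤ 2 ^ n → ‖((j : ℝ) / 2 ^ n) • x‖ ≤ ρ := by
        intro j hj
        rw [norm_smul, Real.norm_eq_abs, abs_of_nonneg (by positivity)]
        have hj1 : (j : ℝ) / 2 ^ n ≤ 1 := by
          rw [div_le_one (by positivity)]
          exact_mod_cast hj
        nlinarith [norm_nonneg x]
      have hrw : ((k : ℝ) / 2 ^ (n+1)) • x
          = (2⁻¹ : ℝ) • ((((a : ℝ) / 2 ^ n) • x) + (((b : ℝ) / 2 ^ n) • x)) := by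
        rw [hsc]; module
      rw [hrw, gmid _ _ (hmem a ha2) (hmem b hb2), ih a ha2, ih b hb2]
      rw [hsc]; module
  -- all scalars in [0,1]
  have scal : ∀ c : ℝ, 0 ≤ c → c ≤ 1 → ∀ x : E, ‖x‖ ≤ ρ → g (c • x) = c • g x := by
    intro c hc0 hc1 x hx
    have hsm : ∀ t : ℝ, 0 ≤ t → t ≤ 1 → ‖t • x‖ ≤ r := by
      intro t ht0 ht1
      rw [norm_smul, Real.norm_eq_abs, abs_of_nonneg ht0]
      nlinarith [norm_nonneg x]
    have key : ∀ n : ℕ, ‖g (c • x) - c • g x‖ ≤ 2 * ‖x‖ / 2 ^ n := by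
      intro n
      set k := ⌊c * 2 ^ n⌋₊ with hk
      have hk2 : k ≤ 2 ^ n := by
        have h1 : c * 2 ^ n ≤ ((2 ^ n : ℕ) : ℝ) := by
          push_cast
          nlinarith [pow_pos (by norm_num : (0:ℝ) < 2) n]
        calc k ≤ ⌊((2 ^ n : ℕ) : ℝ)⌋₊ := Nat.floor_mono h1
          _ = 2 ^ n := Nat.floor_natCast _
      set q : ℝ := (k : ℝ) / 2 ^ n with hq
      have hq0 : 0 ≤ q := by positivity
      have hq1 : q ≤ 1 := by
        rw [hq, div_le_one (by positivity)]; exact_mod_cast hk2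
      have hqc : q ≤ c := by
        rw [hq, div_le_iff₀ (by positivity : (0:ℝ) < 2 ^ n)]
        exact Nat.floor_le (by positivity)
      have hcq : c - q ≤ 1 / 2 ^ n := by
        have hp : (0:ℝ) < 2 ^ n := by positivity
        have h2 : c * 2 ^ n < (k : ℝ) + 1 := Nat.lt_floor_add_one _
        have h3 : c ≤ ((k:ℝ) + 1) / 2 ^ n := by rw [le_div_iff₀ hp]; linarith
        calc c - q ≤ ((k:ℝ) + 1) / 2 ^ n - (k:ℝ) / 2 ^ n := by rw [hq]; linarith
          _ = 1 / 2 ^ n := by ring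
      have e1 : ‖g (c • x) - g (q • x)‖ = (c - q) * ‖x‖ := by
        rw [hiso _ (hsm c hc0 hc1) _ (hsm q hq0 hq1), ← sub_smul, norm_smul,
          Real.norm_eq_abs, abs_of_nonneg (by linarith)]
      have e2 : ‖g (q • x) - c • g x‖ = (c - q) * ‖g x‖ := by
        rw [dyad x hx n k hk2]
        rw [show q • g x - c • g x = -((c - q) • g x) by module, norm_neg, norm_smul,
          Real.norm_eq_abs, abs_of_nonneg (by linarith)]
      have e3 : ‖g x‖ = ‖x‖ := hnorm x (le_trans hx hρr)
      calc ‖g (c • x) - c • g x‖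
          ≤ ‖g (c • x) - g (q • x)‖ + ‖g (q • x) - c • g x‖ :=
            norm_sub_le_norm_sub_add_norm_sub _ _ _
        _ = (c - q) * ‖x‖ + (c - q) * ‖x‖ := by rw [e1, e2, e3]
        _ ≤ 2 * ‖x‖ / 2 ^ n := by
            have h5 : 0 ≤ ‖x‖ := norm_nonneg x
            rw [div_eq_mul_inv]
            have h6 : c - q ≤ (2 ^ n : ℝ)⁻¹ := by
              rwa [one_div] at hcq
            nlinarith
    have h0 : ‖g (c • x) - c • g x‖ ≤ 0 := le_zero_of_forall_le_div_pow key
    have := le_antisymm h0 (norm_nonneg _)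
    rwa [norm_eq_zero, sub_eq_zero] at this
  -- homogeneity: the rescaled value is independent of the scale
  have hom0 : ∀ (x : E) (s t : ℝ), 0 < s → s ≤ t → t ≤ 1 → t * ‖x‖ ≤ ρ →
      s⁻¹ • g (s • x) = t⁻¹ • g (t • x) := by
    intro x s t hs hst ht1 htx
    have ht : 0 < t := lt_of_lt_of_le hs hst
    have htρ : ‖t • x‖ ≤ ρ := by
      rw [norm_smul, Real.norm_eq_abs, abs_of_pos ht]; exact htx
    have hst1 : s / t ≤ 1 := by rw [div_le_one ht]; exact hst
    have hst0 : 0 ≤ s / t := by positivity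
    have h1 : g (s • x) = (s / t) • g (t • x) := by
      rw [show s • x = (s / t) • (t • x) by
        rw [smul_smul, div_mul_cancel₀ _ (ne_of_gt ht)]]
      exact scal (s / t) hst0 hst1 (t • x) htρ
    rw [h1, smul_smul, show s⁻¹ * (s / t) = t⁻¹ by field_simp]
  obtain ⟨T, hT⟩ : ∃ T : E → F, ∀ x : E, T x = ((‖x‖ + ρ) / ρ) • g ((ρ / (‖x‖ + ρ)) • x) :=
    ⟨_, fun _ => rfl⟩
  have homT : ∀ (x : E) (s : ℝ), 0 < s → s ≤ 1 → s * ‖x‖ ≤ ρ → T x = s⁻¹ • g (s • x) := by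
    intro x s hs hs1 hsx
    have hden : 0 < ‖x‖ + ρ := by positivity
    have hTt : T x = (ρ / (‖x‖ + ρ))⁻¹ • g ((ρ / (‖x‖ + ρ)) • x) := by
      rw [hT x, inv_div]
    set t : ℝ := ρ / (‖x‖ + ρ) with ht
    have ht0 : 0 < t := by positivity
    have ht1 : t ≤ 1 := by rw [ht, div_le_one hden]; linarith [norm_nonneg x]
    have htx : t * ‖x‖ ≤ ρ := by
      rw [ht, div_mul_eq_mul_div, div_le_iff₀ hden]
      nlinarith [norm_nonneg x]
    rw [hTt]
    rcases le_total s t with h | h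
    · exact (hom0 x s t hs h ht1 htx).symm
    · exact hom0 x t s ht0 h hs1 hsx
  have Tball : ∀ x : E, ‖x‖ ≤ ρ → T x = g x := by
    intro x hx
    have := homT x 1 one_pos le_rfl (by simpa using hx)
    simpa using this
  have gadd : ∀ a b : E, ‖a‖ ≤ ρ → ‖b‖ ≤ ρ → ‖a + b‖ ≤ ρ → g (a + b) = g a + g b := by
    intro a b ha hb hab
    have h1 : g ((2⁻¹ : ℝ) • (a + b)) = (2⁻¹ : ℝ) • g (a + b) :=
      scal 2⁻¹ (by norm_num) (by norm_num) (a + b) hab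
    have h2 : g ((2⁻¹ : ℝ) • (a + b)) = (2⁻¹ : ℝ) • (g a + g b) := gmid a b ha hb
    have h3 : (2⁻¹ : ℝ) • g (a + b) = (2⁻¹ : ℝ) • (g a + g b) := by rw [← h1, h2]
    exact smul_right_injective F (by norm_num : (2⁻¹:ℝ) ≠ 0) h3
  have Tadd : ∀ x y : E, T (x + y) = T x + T y := by
    intro x y
    set s : ℝ := ρ / (‖x‖ + ‖y‖ + ρ) with hs
    have hden : 0 < ‖x‖ + ‖y‖ + ρ := by positivity
    have hs0 : 0 < s := by positivity
    have hs1 : s ≤ 1 := by rw [hs, div_le_one hden]; linarith [norm_nonneg x, norm_nonneg y]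
    have hkey : ∀ c : ℝ, c ≤ ‖x‖ + ‖y‖ → s * c ≤ ρ := by
      intro c hc
      rw [hs, div_mul_eq_mul_div, div_le_iff₀ hden]
      nlinarith [norm_nonneg x, norm_nonneg y]
    have hsx : s * ‖x‖ ≤ ρ := hkey _ (by linarith [norm_nonneg y])
    have hsy : s * ‖y‖ ≤ ρ := hkey _ (by linarith [norm_nonneg x])
    have hsxy : s * ‖x + y‖ ≤ ρ := hkey _ (norm_add_le x y)
    have hn : ∀ z : E, s * ‖z‖ ≤ ρ → ‖s • z‖ ≤ ρ := by
      intro z hz; rw [norm_smul, Real.norm_eq_abs, abs_of_pos hs0]; exact hz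
    rw [homT (x + y) s hs0 hs1 hsxy, homT x s hs0 hs1 hsx, homT y s hs0 hs1 hsy]
    rw [smul_add, gadd (s • x) (s • y) (hn x hsx) (hn y hsy) (by rw [← smul_add]; exact hn _ hsxy)]
    rw [smul_add]
  have Tiso : ∀ x y : E, ‖T x - T y‖ = ‖x - y‖ := by
    intro x y
    set s : ℝ := ρ / (‖x‖ + ‖y‖ + ρ) with hs
    have hden : 0 < ‖x‖ + ‖y‖ + ρ := by positivity
    have hs0 : 0 < s := by positivity
    have hs1 : s ≤ 1 := by rw [hs, div_le_one hden]; linarith [norm_nonneg x, norm_nonneg y]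
    have hkey : ∀ c : ℝ, c ≤ ‖x‖ + ‖y‖ → s * c ≤ ρ := by
      intro c hc
      rw [hs, div_mul_eq_mul_div, div_le_iff₀ hden]
      nlinarith [norm_nonneg x, norm_nonneg y]
    have hsx : s * ‖x‖ ≤ ρ := hkey _ (by linarith [norm_nonneg y])
    have hsy : s * ‖y‖ ≤ ρ := hkey _ (by linarith [norm_nonneg x])
    have hnr : ∀ z : E, s * ‖z‖ ≤ ρ → ‖s • z‖ ≤ r := by
      intro z hz
      rw [norm_smul, Real.norm_eq_abs, abs_of_pos hs0]; linarith
    rw [homT x s hs0 hs1 hsx, homT y s hs0 hs1 hsy, ← smul_sub, norm_smul,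
      hiso _ (hnr x hsx) _ (hnr y hsy), ← smul_sub, norm_smul]
    rw [Real.norm_eq_abs, Real.norm_eq_abs, abs_of_pos hs0, abs_of_pos (inv_pos.2 hs0)]
    rw [← mul_assoc, inv_mul_cancel₀ (ne_of_gt hs0), one_mul]
  have Tcont : Continuous T := by
    have hI : Isometry T := Isometry.of_dist_eq fun x y => by
      rw [dist_eq_norm, dist_eq_norm, Tiso]
    exact hI.continuous
  obtain ⟨L, hLT⟩ : ∃ L : E →L[ℝ] F, ∀ x : E, L x = T x :=
    ⟨(AddMonoidHom.mk' T Tadd).toRealLinearMap Tcont, fun x => rfl⟩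
  -- L agrees with g on the whole ball (bootstrap)
  have Lball : ∀ x : E, ‖x‖ ≤ r → L x = g x := by
    intro x hx
    rcases le_or_gt ‖x‖ ρ with h | h
    · rw [hLT x]; exact Tball x h
    · obtain ⟨s, hsd⟩ : ∃ s : ℝ, ‖x‖ = s := ⟨_, rfl⟩
      have hs0 : 0 < s := hsd ▸ lt_trans hρpos h
      have h2s : r < 2 * s := by rw [hρ] at h; rw [hsd] at h; linarith
      have hsr : s ≤ r := hsd ▸ hx
      obtain ⟨m, hm⟩ : ∃ m : E, m = (r / (2 * s)) • x := ⟨_, rfl⟩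
      obtain ⟨v, hv⟩ : ∃ v : E, v = (r / s - 1) • x := ⟨_, rfl⟩
      have hrs1 : 1 ≤ r / s := by rw [le_div_iff₀ hs0]; linarith
      have hvn : ‖v‖ = r - s := by
        rw [hv, norm_smul, Real.norm_eq_abs, abs_of_nonneg (by linarith), hsd,
          sub_mul, div_mul_cancel₀ _ (ne_of_gt hs0), one_mul]
      have hmn : ‖m‖ = ρ := by
        rw [hm, norm_smul, Real.norm_eq_abs, abs_of_pos (by positivity), hsd, hρ,
          div_mul_eq_mul_div, mul_comm (2:ℝ) s, ← div_div, mul_div_assoc,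
          div_self (ne_of_gt hs0), mul_one]
      have hsc : (2⁻¹ : ℝ) * (r / s) = r / (2 * s) := by ring
      have hmid : (2⁻¹ : ℝ) • (x + v) = m := by
        rw [hv, hm, show x + (r / s - 1) • x = (r / s) • x by module, smul_smul, hsc]
      have hxv : x - v = (2 - r / s) • x := by rw [hv]; module
      have hxvn : ‖x - v‖ = 2 * s - r := by
        rw [hxv, norm_smul, Real.norm_eq_abs, hsd,
          abs_of_nonneg (by rw [sub_nonneg, div_le_iff₀ hs0]; linarith), sub_mul,
          div_mul_cancel₀ _ (ne_of_gt hs0)]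
      have hcond : ‖x‖ + ‖v‖ + ‖x - v‖ ≤ 2 * r := by
        rw [hvn, hxvn, hsd]; linarith
      have hgm := mid x v hcond
      rw [hmid] at hgm
      have hvρ : ‖v‖ ≤ ρ := by rw [hvn, hρ]; linarith
      have e1 : T m = (2⁻¹ : ℝ) • (g x + g v) := (Tball m (le_of_eq hmn)).trans hgm
      have e2 : T v = g v := Tball v hvρ
      have hx2 : x = (2 : ℝ) • m - v := by rw [← hmid]; module
      have e3 : L x = (2 : ℝ) • L m - L v := by
        conv_lhs => rw [hx2]
        rw [map_sub, map_smul]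
      rw [e3, hLT m, hLT v, e1, e2, hx2]
      module
  -- surjectivity
  have Lsurj : Surjective L := by
    intro w
    rcases eq_or_ne w 0 with rfl | hw
    · exact ⟨0, map_zero L⟩
    · have hwpos : 0 < ‖w‖ := norm_pos_iff.2 hw
      set c : ℝ := ρ / ‖w‖ with hc
      have hc0 : 0 < c := by positivity
      have hcw : ‖c • w‖ = ρ := by
        rw [norm_smul, Real.norm_eq_abs, abs_of_pos hc0, hc,
          div_mul_cancel₀ _ (ne_of_gt hwpos)]
      obtain ⟨u, hur, hgu⟩ := hsurj (c • w) (by rw [hcw]; exact hρr)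
      refine ⟨c⁻¹ • u, ?_⟩
      rw [map_smul, Lball u hur, hgu, smul_smul, inv_mul_cancel₀ (ne_of_gt hc0), one_smul]
  refine ⟨(L : E →ₗ[ℝ] F), ?_, ?_, ?_⟩
  · exact Lsurj
  · intro x y
    show ‖L x - L y‖ = ‖x - y‖
    rw [hLT x, hLT y]; exact Tiso x y
  · intro x hx
    show L x = g x
    exact Lball x hx



end Mankiewicz

/-- Mankiewicz's theorem: a surjective distance-preserving map between closed balls of
the same radius in real Banach spaces extends uniquely to an affine isometry of the
whole spaces. -/
theorem mankiewicz_extension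
    {X Y : Type*} [NormedAddCommGroup X] [NormedSpace ℝ X] [CompleteSpace X]
    [NormedAddCommGroup Y] [NormedSpace ℝ Y] [CompleteSpace Y]
    (x₀ : X) (y₀ : Y) (r : ℝ) (hr : 0 < r) (f : X → Y)
    (hmaps : ∀ u ∈ Metric.closedBall x₀ r, f u ∈ Metric.closedBall y₀ r)
    (hsurj : ∀ w ∈ Metric.closedBall y₀ r, ∃ u ∈ Metric.closedBall x₀ r, f u = w)
    (hiso : ∀ u ∈ Metric.closedBall x₀ r, ∀ v ∈ Metric.closedBall x₀ r,
      ‖f u - f v‖ = ‖u - v‖) :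
    ∃! F : X → Y,
      Function.Surjective F ∧
      (∀ x y : X, ∀ t ∈ Set.Icc (0 : ℝ) 1,
        F ((1 - t) • x + t • y) = (1 - t) • F x + t • F y) ∧
      (∀ x y : X, ‖F x - F y‖ = ‖x - y‖) ∧
      (∀ x ∈ Metric.closedBall x₀ r, F x = f x) := by
  have hmemX : ∀ x : X, x ∈ Metric.closedBall x₀ r ↔ ‖x - x₀‖ ≤ r := fun x => by
    rw [Metric.mem_closedBall, dist_eq_norm]
  have hmemY : ∀ y : Y, y ∈ Metric.closedBall y₀ r ↔ ‖y - y₀‖ ≤ r := fun y => by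
    rw [Metric.mem_closedBall, dist_eq_norm]
  obtain ⟨g, hg⟩ : ∃ g : X → Y, ∀ u : X, g u = f (x₀ + u) - y₀ := ⟨_, fun _ => rfl⟩
  have hball : ∀ u : X, ‖u‖ ≤ r → x₀ + u ∈ Metric.closedBall x₀ r := fun u hu => by
    rw [hmemX]; simpa using hu
  have hmaps' : ∀ u : X, ‖u‖ ≤ r → ‖g u‖ ≤ r := by
    intro u hu
    rw [hg]
    exact (hmemY _).1 (hmaps _ (hball u hu))
  have hsurj' : ∀ w : Y, ‖w‖ ≤ r → ∃ u : X, ‖u‖ ≤ r ∧ g u = w := by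
    intro w hw
    obtain ⟨a, ha, hfa⟩ := hsurj (y₀ + w) (by rw [hmemY]; simpa using hw)
    refine ⟨a - x₀, by rw [← hmemX]; exact ha, ?_⟩
    rw [hg, add_sub_cancel, hfa, add_sub_cancel_left]
  have hiso' : ∀ u : X, ‖u‖ ≤ r → ∀ v : X, ‖v‖ ≤ r → ‖g u - g v‖ = ‖u - v‖ := by
    intro u hu v hv
    rw [hg, hg, sub_sub_sub_cancel_right, hiso _ (hball u hu) _ (hball v hv)]
    simp
  obtain ⟨L, Lsurj, Liso, Lball⟩ := Mankiewicz.core r hr g hmaps' hsurj' hiso'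
  obtain ⟨G, hG⟩ : ∃ G : X → Y, ∀ x : X, G x = y₀ + L (x - x₀) := ⟨_, fun _ => rfl⟩
  have hGball : ∀ x ∈ Metric.closedBall x₀ r, G x = f x := by
    intro x hx
    rw [hG, Lball _ ((hmemX x).1 hx), hg, show x₀ + (x - x₀) = x by abel]
    abel
  refine ⟨G, ⟨?_, ?_, ?_, hGball⟩, ?_⟩
  · -- surjective
    intro w
    obtain ⟨u, hu⟩ := Lsurj (w - y₀)
    exact ⟨x₀ + u, by rw [hG, add_sub_cancel_left, hu]; abel⟩
  · -- affine
    intro x y t _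
    have h1 : (1 - t) • x + t • y - x₀ = (1 - t) • (x - x₀) + t • (y - x₀) := by module
    rw [hG, hG, hG, h1, map_add, map_smul, map_smul]
    module
  · -- isometric
    intro x y
    rw [hG, hG, show y₀ + L (x - x₀) - (y₀ + L (y - x₀)) = L (x - x₀) - L (y - x₀) by abel,
      Liso, sub_sub_sub_cancel_right]
  · -- uniqueness
    intro G' ⟨_, hGaff', _, hGball'⟩
    funext x
    obtain ⟨t, htd⟩ : ∃ t : ℝ, t = r / (r + ‖x - x₀‖) := ⟨_, rfl⟩
    have hden : 0 < r + ‖x - x₀‖ := by positivity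
    have ht0 : 0 < t := by rw [htd]; positivity
    have ht1 : t ≤ 1 := by rw [htd, div_le_one hden]; linarith [norm_nonneg (x - x₀)]
    have hpt : (1 - t) • x₀ + t • x ∈ Metric.closedBall x₀ r := by
      rw [hmemX, show (1 - t) • x₀ + t • x - x₀ = t • (x - x₀) by module, norm_smul,
        Real.norm_eq_abs, abs_of_pos ht0, htd, div_mul_eq_mul_div, div_le_iff₀ hden]
      nlinarith [norm_nonneg (x - x₀)]
    have hx₀ : x₀ ∈ Metric.closedBall x₀ r := Metric.mem_closedBall_self hr.le
    have key : ∀ G'' : X → Y,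
        (∀ x y : X, ∀ t ∈ Set.Icc (0 : ℝ) 1,
          G'' ((1 - t) • x + t • y) = (1 - t) • G'' x + t • G'' y) →
        (∀ x ∈ Metric.closedBall x₀ r, G'' x = f x) →
        t • G'' x = f ((1 - t) • x₀ + t • x) - (1 - t) • f x₀ := by
      intro G'' haff hball'
      have h1 := haff x₀ x t ⟨ht0.le, ht1⟩
      rw [hball' _ hpt, hball' _ hx₀] at h1
      rw [h1]; abel
    have h1 := key G' hGaff' hGball'
    have h2 := key G (fun x y t ht => by
      have h1' : (1 - t) • x + t • y - x₀ = (1 - t) • (x - x₀) + t • (y - x₀) := by module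
      rw [hG, hG, hG, h1', map_add, map_smul, map_smul]; module) hGball
    have h3 : t • G' x = t • G x := by rw [h1, h2]
    exact smul_right_injective Y (ne_of_gt ht0) h3
end
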